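/- Let T be a bounded linear operator between Hilbert spaces, α > 0, δ ≥ 0, y, y^δ ∈ Y with ‖y − y^δ‖ ≤ δ, and i ≥ 1. If x_{α,i} and x_{α,i}^δ denote the iterated Tikhonov approximations ∑_{k=1}^{i} α^{k-1}(T*T+αI)^{-k} T* y and ∑_{k=1}^{i} α^{k-1}(T*T+αI)^{-k} T* y^δ respectively, then ‖x_{α,i} − x_{α,i}^δ‖ ≤ i δ / (2√α). -/

import Mathlib

open ContinuousLinearMap in
private lemma tikhonov_inv_apply
    {X Y : Type*} [NormedAddCommGroup X] [InnerProductSpace ℝ X] [CompleteSpace X]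
    [NormedAddCommGroup Y] [InnerProductSpace ℝ Y] [CompleteSpace Y]
    (T : X →L[ℝ] Y) (α : ℝ) (B : X →L[ℝ] X)
    (hB₂ : (adjoint T ∘L T + α • 1) * B = 1) (x : X) :
    adjoint T (T (B x)) + α • (B x) = x := by
  have := congrArg (fun f : X →L[ℝ] X => f x) hB₂
  simpa [ContinuousLinearMap.mul_apply, ContinuousLinearMap.add_apply,
    ContinuousLinearMap.comp_apply, ContinuousLinearMap.smul_apply,
    ContinuousLinearMap.one_apply] using this

open ContinuousLinearMap in
private lemma tikhonov_energy
    {X Y : Type*} [NormedAddCommGroup X] [InnerProductSpace ℝ X] [CompleteSpace X]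
    [NormedAddCommGroup Y] [InnerProductSpace ℝ Y] [CompleteSpace Y]
    (T : X →L[ℝ] Y) (α : ℝ) (B : X →L[ℝ] X)
    (hB₂ : (adjoint T ∘L T + α • 1) * B = 1) (x : X) :
    ‖T (B x)‖ ^ 2 + α * ‖B x‖ ^ 2 = inner ℝ x (B x) := by
  have hx := tikhonov_inv_apply T α B hB₂ x
  have h := congrArg (fun w : X => (inner ℝ w (B x) : ℝ)) hx
  simp only [inner_add_left, inner_smul_left, RCLike.conj_to_real] at h
  rw [ContinuousLinearMap.adjoint_inner_left, real_inner_self_eq_norm_sq,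
    real_inner_self_eq_norm_sq] at h
  linarith [h]

open ContinuousLinearMap in
private lemma tikhonov_B_bound
    {X Y : Type*} [NormedAddCommGroup X] [InnerProductSpace ℝ X] [CompleteSpace X]
    [NormedAddCommGroup Y] [InnerProductSpace ℝ Y] [CompleteSpace Y]
    (T : X →L[ℝ] Y) (α : ℝ) (hα : 0 < α) (B : X →L[ℝ] X)
    (hB₂ : (adjoint T ∘L T + α • 1) * B = 1) (x : X) :
    α * ‖B x‖ ≤ ‖x‖ := by
  have h := tikhonov_energy T α B hB₂ x
  have hle : (inner ℝ x (B x) : ℝ) ≤ ‖x‖ * ‖B x‖ := real_inner_le_norm x (B x)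
  have h2 : α * ‖B x‖ ^ 2 ≤ ‖x‖ * ‖B x‖ := by nlinarith [sq_nonneg ‖T (B x)‖]
  rcases eq_or_lt_of_le (norm_nonneg (B x)) with h0 | h0
  · rw [← h0]; simpa using norm_nonneg x
  · have := (mul_le_mul_iff_of_pos_right h0).mp (by nlinarith : (α * ‖B x‖) * ‖B x‖ ≤ ‖x‖ * ‖B x‖)
    exact this

open ContinuousLinearMap in
private lemma tikhonov_pow_bound
    {X Y : Type*} [NormedAddCommGroup X] [InnerProductSpace ℝ X] [CompleteSpace X]
    [NormedAddCommGroup Y] [InnerProductSpace ℝ Y] [CompleteSpace Y]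
    (T : X →L[ℝ] Y) (α : ℝ) (hα : 0 < α) (B : X →L[ℝ] X)
    (hB₂ : (adjoint T ∘L T + α • 1) * B = 1) (k : ℕ) (v : X) :
    α ^ k * ‖(B ^ k) v‖ ≤ ‖v‖ := by
  induction k generalizing v with
  | zero => simp
  | succ n ih =>
    have hstep : (B ^ (n + 1)) v = (B ^ n) (B v) := by
      rw [pow_succ]; rfl
    rw [hstep, pow_succ, mul_comm (α ^ n) α, mul_assoc]
    calc α * (α ^ n * ‖(B ^ n) (B v)‖) ≤ α * ‖B v‖ := by
          exact mul_le_mul_of_nonneg_left (ih (B v)) hα.le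
      _ ≤ ‖v‖ := tikhonov_B_bound T α hα B hB₂ v

open ContinuousLinearMap in
private lemma tikhonov_BTstar_bound
    {X Y : Type*} [NormedAddCommGroup X] [InnerProductSpace ℝ X] [CompleteSpace X]
    [NormedAddCommGroup Y] [InnerProductSpace ℝ Y] [CompleteSpace Y]
    (T : X →L[ℝ] Y) (α : ℝ) (hα : 0 < α) (B : X →L[ℝ] X)
    (hB₂ : (adjoint T ∘L T + α • 1) * B = 1) (z : Y) :
    ‖B (adjoint T z)‖ ≤ ‖z‖ / (2 * Real.sqrt α) := by
  set x := B (adjoint T z) with hxdef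
  have h := tikhonov_energy T α B hB₂ (adjoint T z)
  rw [ContinuousLinearMap.adjoint_inner_left] at h
  have hle : (inner ℝ z (T x) : ℝ) ≤ ‖z‖ * ‖T x‖ := real_inner_le_norm z (T x)
  have hkey : α * ‖x‖ ^ 2 ≤ ‖z‖ ^ 2 / 4 := by nlinarith [sq_nonneg (‖T x‖ - ‖z‖ / 2)]
  have hs : (0:ℝ) < Real.sqrt α := Real.sqrt_pos.mpr hα
  rw [le_div_iff₀ (by positivity)]
  have hsq : (‖x‖ * (2 * Real.sqrt α)) ^ 2 ≤ ‖z‖ ^ 2 := by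
    have : Real.sqrt α ^ 2 = α := Real.sq_sqrt hα.le
    nlinarith
  have := Real.sqrt_le_sqrt hsq
  rwa [Real.sqrt_sq (by positivity), Real.sqrt_sq (norm_nonneg z)] at this

open ContinuousLinearMap in
/-- Noise-propagation bound for iterated Tikhonov: if `‖y − yδ‖ ≤ δ`, then the iterated
Tikhonov approximations built from `y` and `yδ` satisfy
`‖x_{α,i} − x_{α,i}^δ‖ ≤ i δ / (2√α)`. -/
theorem iterated_tikhonov_noise_bound
    {X Y : Type*} [NormedAddCommGroup X] [InnerProductSpace ℝ X] [CompleteSpace X]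
    [NormedAddCommGroup Y] [InnerProductSpace ℝ Y] [CompleteSpace Y]
    (T : X →L[ℝ] Y) (α : ℝ) (hα : 0 < α) (δ : ℝ) (hδ : 0 ≤ δ)
    (y yδ : Y) (hnoise : ‖y - yδ‖ ≤ δ) (i : ℕ) (hi : 1 ≤ i)
    (B : X →L[ℝ] X)
    (hB₁ : B * (adjoint T ∘L T + α • 1) = 1)
    (hB₂ : (adjoint T ∘L T + α • 1) * B = 1) :
    ‖(∑ k ∈ Finset.range i, α ^ k • (B ^ (k + 1)) (adjoint T y)) -
      ∑ k ∈ Finset.range i, α ^ k • (B ^ (k + 1)) (adjoint T yδ)‖ ≤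
      (i : ℝ) * δ / (2 * Real.sqrt α) := by
  rw [← Finset.sum_sub_distrib]
  have hterm : ∀ k ∈ Finset.range i,
      ‖α ^ k • (B ^ (k + 1)) (adjoint T y) - α ^ k • (B ^ (k + 1)) (adjoint T yδ)‖
        ≤ δ / (2 * Real.sqrt α) := by
    intro k _
    have heq : α ^ k • (B ^ (k + 1)) (adjoint T y) - α ^ k • (B ^ (k + 1)) (adjoint T yδ)
        = α ^ k • (B ^ (k + 1)) (adjoint T (y - yδ)) := by
      rw [← smul_sub, map_sub, map_sub]
    rw [heq]
    have hstep : (B ^ (k + 1)) (adjoint T (y - yδ)) = (B ^ k) (B (adjoint T (y - yδ))) := by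
      rw [pow_succ]; rfl
    rw [norm_smul, hstep]
    have h1 : α ^ k * ‖(B ^ k) (B (adjoint T (y - yδ)))‖ ≤ ‖B (adjoint T (y - yδ))‖ :=
      tikhonov_pow_bound T α hα B hB₂ k _
    have h2 : ‖B (adjoint T (y - yδ))‖ ≤ ‖y - yδ‖ / (2 * Real.sqrt α) :=
      tikhonov_BTstar_bound T α hα B hB₂ (y - yδ)
    have h3 : ‖y - yδ‖ / (2 * Real.sqrt α) ≤ δ / (2 * Real.sqrt α) := by
      have hs : (0:ℝ) < Real.sqrt α := Real.sqrt_pos.mpr hα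
      gcongr
    have habs : ‖α ^ k‖ = α ^ k := by
      rw [Real.norm_eq_abs, abs_of_nonneg (pow_nonneg hα.le k)]
    rw [habs]
    linarith
  calc ‖∑ k ∈ Finset.range i,
        (α ^ k • (B ^ (k + 1)) (adjoint T y) - α ^ k • (B ^ (k + 1)) (adjoint T yδ))‖
      ≤ ∑ k ∈ Finset.range i, ‖α ^ k • (B ^ (k + 1)) (adjoint T y)
          - α ^ k • (B ^ (k + 1)) (adjoint T yδ)‖ := norm_sum_le _ _
    _ ≤ ∑ _k ∈ Finset.range i, δ / (2 * Real.sqrt α) := Finset.sum_le_sum hterm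
    _ = (i : ℝ) * (δ / (2 * Real.sqrt α)) := by
        rw [Finset.sum_const, Finset.card_range, nsmul_eq_mul]
    _ = (i : ℝ) * δ / (2 * Real.sqrt α) := by ring
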